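/- Let A₁ be a vertex of a convex polygon with angle ∠A₁, W a point with |A₁W| ≤ r, and y₁, y₂ points on the two sides of the angle at A₁ with |W y₁| = |W y₂| = r. Then the angle ∠y₁ W y₂ of the quadrilateral A₁ y₁ W y₂ satisfies ∠y₁ W y₂ ≥ 2π − 2∠A₁; in particular if ∠A₁ < 2π/3 then ∠y₁ W y₂ > 2π/3. -/

import Mathlib

open Real EuclideanGeometry

set_option maxHeartbeats 1000000 in
/-- Larger side is opposite larger angle: in triangle `A y W`, if `|AW| ≤ |Wy|`
then the angle at `y` is at most the angle at `A`. -/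
lemma angle_le_angle_of_dist_le (A y W : EuclideanSpace ℝ (Fin 2))
    (h : dist A W ≤ dist W y) : ∠ A y W ≤ ∠ W A y := by
  by_cases hWy : W = y
  · subst hWy
    have hA : A = W := by
      have h0 : dist A W = 0 := le_antisymm (by simpa using h) dist_nonneg
      exact dist_eq_zero.mp h0
    subst hA
    simp
  by_cases hAW : A = W
  · subst hAW
    have : ∠ A y A = 0 := EuclideanGeometry.angle_self_of_ne hWy
    rw [this]
    exact EuclideanGeometry.angle_nonneg _ _ _
  by_cases hAy : A = y
  · subst hAy
    rw [EuclideanGeometry.angle_self_left, EuclideanGeometry.angle_self_right]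
  -- nondegenerate case
  have hc : 0 < dist A y := dist_pos.mpr hAy
  have hb : 0 < dist A W := dist_pos.mpr hAW
  have ha : 0 < dist W y := lt_of_lt_of_le hb h
  have lawy := EuclideanGeometry.law_cos A y W
  have lawA := EuclideanGeometry.law_cos W A y
  rw [dist_comm W A, dist_comm y A] at lawA
  have htri : dist A y ≤ dist A W + dist W y := dist_triangle A W y
  set a := dist W y with ha'
  set b := dist A W with hb'
  set c := dist A y with hc'
  have e1 : 2 * c * a * Real.cos (∠ A y W) = c * c + a * a - b * b := by linarith
  have e2 : 2 * b * c * Real.cos (∠ W A y) = b * b + c * c - a * a := by linarith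
  have hfac : 0 ≤ (a - b) * ((b + a) - c) * ((b + a) + c) := by
    apply mul_nonneg
    · apply mul_nonneg (by linarith) (by linarith)
    · positivity
  have hid : b * (c * c + a * a - b * b) - a * (b * b + c * c - a * a)
      = (a - b) * ((b + a) - c) * ((b + a) + c) := by ring
  have hmul : a * (b * b + c * c - a * a) ≤ b * (c * c + a * a - b * b) := by linarith
  have f2 : 2 * (a * b * c) * Real.cos (∠ W A y) = a * (b * b + c * c - a * a) := by
    calc 2 * (a * b * c) * Real.cos (∠ W A y) = a * (2 * b * c * Real.cos (∠ W A y)) := by ring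
      _ = a * (b * b + c * c - a * a) := by rw [e2]
  have f1 : 2 * (a * b * c) * Real.cos (∠ A y W) = b * (c * c + a * a - b * b) := by
    calc 2 * (a * b * c) * Real.cos (∠ A y W) = b * (2 * c * a * Real.cos (∠ A y W)) := by ring
      _ = b * (c * c + a * a - b * b) := by rw [e1]
  have hcos : Real.cos (∠ W A y) ≤ Real.cos (∠ A y W) := by
    have hpos : (0:ℝ) < 2 * (a * b * c) := by positivity
    have : 2 * (a * b * c) * Real.cos (∠ W A y) ≤ 2 * (a * b * c) * Real.cos (∠ A y W) := by
      rw [f1, f2]; exact hmul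
    exact le_of_mul_le_mul_left this hpos
  exact (Real.strictAntiOn_cos.le_iff_ge
    ⟨EuclideanGeometry.angle_nonneg W A y, EuclideanGeometry.angle_le_pi W A y⟩
    ⟨EuclideanGeometry.angle_nonneg A y W, EuclideanGeometry.angle_le_pi A y W⟩).mp hcos

theorem quadrilateral_angle_at_W_ge
    (A₁ W y₁ y₂ : EuclideanSpace ℝ (Fin 2)) (r ω : ℝ) (hr : 0 < r)
    (hAW : dist A₁ W ≤ r)
    (hy₁ : dist W y₁ = r) (hy₂ : dist W y₂ = r)
    (hsplit : ∠ y₁ A₁ W + ∠ W A₁ y₂ = ∠ y₁ A₁ y₂)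
    (hω : ω = 2 * π - ∠ y₁ A₁ y₂ - ∠ A₁ y₁ W - ∠ A₁ y₂ W) :
    ω ≥ 2 * π - 2 * ∠ y₁ A₁ y₂ ∧ (∠ y₁ A₁ y₂ < 2 * π / 3 → ω > 2 * π / 3) := by
  have h1 : ∠ A₁ y₁ W ≤ ∠ W A₁ y₁ :=
    angle_le_angle_of_dist_le A₁ y₁ W (hy₁ ▸ hAW)
  have h2 : ∠ A₁ y₂ W ≤ ∠ W A₁ y₂ :=
    angle_le_angle_of_dist_le A₁ y₂ W (hy₂ ▸ hAW)
  have e1 : ∠ W A₁ y₁ = ∠ y₁ A₁ W := EuclideanGeometry.angle_comm _ _ _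
  rw [e1] at h1
  have hsum : ∠ A₁ y₁ W + ∠ A₁ y₂ W ≤ ∠ y₁ A₁ y₂ := by linarith
  exact ⟨by linarith, fun hlt => by linarith⟩
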